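/- Let a_i be the telephone numbers defined by a_0 = a_1 = 1 and a_i = a_{i-1} + (i-1)a_{i-2} for i ≥ 2. Define b_n = a_{⌊(n+1)/2⌋} / ⌊n/2⌋! (as a rational number). Then for every odd n ≥ 5, b_n = 2(b_{n-2} + b_{n-3} + b_{n-4})/(n-1). -/

import Mathlib

/-- The telephone numbers: `a 0 = a 1 = 1`, `a (i+2) = a (i+1) + (i+1) * a i`. -/
def telephone : ℕ → ℕ
  | 0 => 1
  | 1 => 1
  | (i + 2) => telephone (i + 1) + (i + 1) * telephone i

/-- `b n = a_{⌊(n+1)/2⌋} / ⌊n/2⌋!` as a rational number. -/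
noncomputable def bSeq (n : ℕ) : ℚ := (telephone ((n + 1) / 2) : ℚ) / (Nat.factorial (n / 2) : ℚ)

theorem stmt_1 (n : ℕ) (hn : 5 ≤ n) (hodd : Odd n) :
    bSeq n = 2 * (bSeq (n - 2) + bSeq (n - 3) + bSeq (n - 4)) / ((n : ℚ) - 1) := by
  obtain ⟨k, rfl⟩ := hodd
  obtain ⟨m, rfl⟩ : ∃ m, k = m + 2 := ⟨k - 2, by omega⟩
  have h1 : 2 * (m + 2) + 1 - 2 = 2 * m + 3 := by omega
  have h2 : 2 * (m + 2) + 1 - 3 = 2 * m + 2 := by omega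
  have h3 : 2 * (m + 2) + 1 - 4 = 2 * m + 1 := by omega
  rw [h1, h2, h3]
  simp only [bSeq]
  have e0 : (2 * (m + 2) + 1 + 1) / 2 = m + 3 := by omega
  have e0' : (2 * (m + 2) + 1) / 2 = m + 2 := by omega
  have e1 : (2 * m + 3 + 1) / 2 = m + 2 := by omega
  have e1' : (2 * m + 3) / 2 = m + 1 := by omega
  have e2 : (2 * m + 2 + 1) / 2 = m + 1 := by omega
  have e2' : (2 * m + 2) / 2 = m + 1 := by omega
  have e3 : (2 * m + 1 + 1) / 2 = m + 1 := by omega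
  have e3' : (2 * m + 1) / 2 = m := by omega
  rw [e0, e0', e1, e1', e2', e3']
  have ht : telephone (m + 3) = telephone (m + 2) + (m + 2) * telephone (m + 1) := rfl
  have hf2 : (Nat.factorial (m + 2) : ℚ) = (m + 2) * (m + 1) * Nat.factorial m := by
    rw [Nat.factorial_succ, Nat.factorial_succ]; push_cast; ring
  have hf1 : (Nat.factorial (m + 1) : ℚ) = (m + 1) * Nat.factorial m := by
    rw [Nat.factorial_succ]; push_cast; ring
  have hm : (Nat.factorial m : ℚ) ≠ 0 := Nat.cast_ne_zero.mpr m.factorial_ne_zero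
  have hm1 : (m : ℚ) + 1 ≠ 0 := by positivity
  have hm2 : (m : ℚ) + 2 ≠ 0 := by positivity
  have hden : (↑(2 * (m + 2) + 1) : ℚ) - 1 ≠ 0 := by push_cast; have h0 : (0:ℚ) ≤ (m:ℚ) := Nat.cast_nonneg m; intro h; linarith
  rw [ht, hf2, hf1]
  field_simp
  push_cast
  ring
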